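/- Let G be a finite p-group of maximal class having an abelian subgroup A of index p. Then every non-abelian subgroup of G is of maximal class. -/

import Mathlib

open Subgroup
open scoped commutatorElement

section Helpers
variable {K : Type*} [Group K]

private lemma lcs_stab {j : ℕ} (h : (⊤ : Subgroup K).lowerCentralSeries (j+1) = (⊤ : Subgroup K).lowerCentralSeries j) :
    ∀ k, j ≤ k → (⊤ : Subgroup K).lowerCentralSeries k = (⊤ : Subgroup K).lowerCentralSeries j := by
  intro k hk
  induction k with
  | zero => simp only [Nat.le_zero] at hk; rw [hk]
  | succ k ih =>
    rcases Nat.eq_or_lt_of_le hk with heq | hlt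
    · rw [← heq]
    · have hjk : j ≤ k := by omega
      rw [Subgroup.lowerCentralSeries_succ, ih hjk, ← Subgroup.lowerCentralSeries_succ, h]

private lemma card_mul_le_of_lt {p : ℕ} (hp : p.Prime) [Finite K] (hK : IsPGroup p K)
    {S T : Subgroup K} (hle : S ≤ T) (hne : S ≠ T) : Nat.card S * p ≤ Nat.card T := by
  haveI : Fact p.Prime := ⟨hp⟩
  obtain ⟨a, ha⟩ := (hK.to_subgroup S).exists_card_eq
  obtain ⟨b, hb⟩ := (hK.to_subgroup T).exists_card_eq
  have hdvd : Nat.card S ∣ Nat.card T := Subgroup.card_dvd_of_le hle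
  rw [ha, hb] at hdvd
  have hab : a ≤ b := (Nat.pow_dvd_pow_iff_le_right hp.one_lt).mp hdvd
  have hne' : a ≠ b := by
    intro hEq
    exact hne (Subgroup.eq_of_le_of_card_ge hle (by rw [ha, hb, hEq]))
  have hab1 : a + 1 ≤ b := by omega
  calc Nat.card S * p = p ^ (a + 1) := by rw [ha, pow_succ]
    _ ≤ p ^ b := Nat.pow_le_pow_right hp.pos hab1
    _ = Nat.card T := hb.symm

private lemma isCoatom_of_index_prime [Finite K] {p : ℕ} (hp : p.Prime) {S : Subgroup K}
    (h : S.index = p) : IsCoatom S := by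
  constructor
  · intro htop
    rw [htop, Subgroup.index_top] at h
    exact hp.one_lt.ne (h ▸ rfl)
  · intro T hT
    have hle := hT.le
    have hmul := Subgroup.relIndex_mul_index hle
    rw [h] at hmul
    have hdvd : T.index ∣ p := Dvd.intro_left _ hmul
    rcases (Nat.Prime.eq_one_or_self_of_dvd hp _ hdvd) with h1 | h2
    · exact Subgroup.index_eq_one.mp h1
    · exfalso
      rw [h2] at hmul
      have hone : S.relIndex T = 1 := by
        have hppos := hp.pos
        nlinarith [hmul]
      exact hT.ne (le_antisymm hle (Subgroup.relIndex_eq_one.mp hone))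

private lemma closure_union_singleton_eq_top [Finite K] {p : ℕ} (hp : p.Prime) {S : Subgroup K}
    (hS : S.index = p) {x : K} (hx : x ∉ S) :
    Subgroup.closure ((S : Set K) ∪ {x}) = ⊤ := by
  have hco : IsCoatom S := isCoatom_of_index_prime hp hS
  have h1 : S ≤ Subgroup.closure ((S : Set K) ∪ {x}) := by
    calc S = Subgroup.closure (S : Set K) := (Subgroup.closure_eq S).symm
      _ ≤ _ := Subgroup.closure_mono (Set.subset_union_left)
  have hxmem : x ∈ Subgroup.closure ((S : Set K) ∪ {x}) :=
    Subgroup.subset_closure (Set.mem_union_right _ rfl)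
  exact hco.2 _ (lt_of_le_of_ne h1 (fun hEq => hx (hEq ▸ hxmem)))

private lemma card_dom_eq_range_mul_ker {M N : Type*} [Group M] [Group N] [Finite M]
    (f : M →* N) : Nat.card M = Nat.card f.range * Nat.card f.ker := by
  rw [Subgroup.card_eq_card_quotient_mul_card_subgroup f.ker,
    Nat.card_congr (QuotientGroup.quotientKerEquivRange f).toEquiv]

private def commHom (B : Subgroup K) [hB : IsMulCommutative ↥B] (h : K)
    (hBh : ∀ b ∈ B, ⁅b, h⁆ ∈ B) : ↥B →* K where
  toFun b := ⁅(b : K), h⁆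
  map_one' := by simp
  map_mul' b1 b2 := by
    have key : ⁅((b1 * b2 : ↥B) : K), h⁆
        = (b1 : K) * ⁅(b2 : K), h⁆ * (b1 : K)⁻¹ * ⁅(b1 : K), h⁆ := by
      push_cast
      simp only [commutatorElement_def]
      group
    have c1 : (b1 : K) * ⁅(b2 : K), h⁆ * (b1 : K)⁻¹ = ⁅(b2 : K), h⁆ := by
      have := Subgroup.mul_comm_of_mem_isMulCommutative B b1.2 (hBh _ b2.2)
      rw [this]; group
    have c2 : ⁅(b2 : K), h⁆ * ⁅(b1 : K), h⁆ = ⁅(b1 : K), h⁆ * ⁅(b2 : K), h⁆ :=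
      Subgroup.mul_comm_of_mem_isMulCommutative B (hBh _ b2.2) (hBh _ b1.2)
    show ⁅((b1 * b2 : ↥B) : K), h⁆ = ⁅(b1 : K), h⁆ * ⁅(b2 : K), h⁆
    rw [key, c1, c2]

@[simp] private lemma commHom_apply (B : Subgroup K) [hB : IsMulCommutative ↥B] (h : K)
    (hBh : ∀ b ∈ B, ⁅b, h⁆ ∈ B) (b : ↥B) : commHom B h hBh b = ⁅(b : K), h⁆ := rfl

private lemma commutator_top_le_range (B : Subgroup K) [hB : IsMulCommutative ↥B] (h : K)
    (hBh : ∀ b ∈ B, ⁅b, h⁆ ∈ B)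
    (hconj : ∀ b ∈ B, h * b * h⁻¹ ∈ B)
    (hconj' : ∀ b ∈ B, h⁻¹ * b * h ∈ B)
    (hgen : Subgroup.closure ((B : Set K) ∪ {h}) = ⊤) :
    ⁅(⊤ : Subgroup K), (⊤ : Subgroup K)⁆ ≤ (commHom B h hBh).range := by
  set R := (commHom B h hBh).range with hR
  have hRB : R ≤ B := by
    rintro x ⟨b, rfl⟩
    exact hBh _ b.2
  have hconjh : ∀ x ∈ R, h * x * h⁻¹ ∈ R := by
    rintro x ⟨b, rfl⟩
    refine ⟨⟨h * (b : K) * h⁻¹, hconj _ b.2⟩, ?_⟩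
    simp only [commHom_apply, commutatorElement_def]
    group
  have hconjh' : ∀ x ∈ R, h⁻¹ * x * h ∈ R := by
    rintro x ⟨b, rfl⟩
    refine ⟨⟨h⁻¹ * (b : K) * h, hconj' _ b.2⟩, ?_⟩
    simp only [commHom_apply, commutatorElement_def]
    group
  have hnorm : R.Normal := by
    rw [← Subgroup.normalizer_eq_top_iff]
    rw [eq_top_iff, ← hgen, Subgroup.closure_le]
    rintro x (hxB | hxh)
    · rw [SetLike.mem_coe, Subgroup.mem_normalizer_iff]
      intro y
      constructor
      · intro hy
        have hxy : x * y * x⁻¹ = y := by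
          have := Subgroup.mul_comm_of_mem_isMulCommutative B hxB (hRB hy)
          rw [this]; group
        rw [hxy]; exact hy
      · intro hy
        have hyB : x * y * x⁻¹ ∈ B := hRB hy
        have hyB' : y ∈ B := by
          have hy2 : y = x⁻¹ * (x * y * x⁻¹) * x := by group
          rw [hy2]
          exact B.mul_mem (B.mul_mem (B.inv_mem hxB) hyB) hxB
        have hxy : x * y * x⁻¹ = y := by
          have := Subgroup.mul_comm_of_mem_isMulCommutative B hxB hyB'
          rw [this]; group
        rwa [hxy] at hy
    · rw [Set.mem_singleton_iff] at hxh
      rw [hxh, SetLike.mem_coe, Subgroup.mem_normalizer_iff]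
      intro y
      constructor
      · exact hconjh y
      · intro hy
        have hy2 : y = h⁻¹ * (h * y * h⁻¹) * h := by group
        rw [hy2]
        exact hconjh' _ hy
  set π := QuotientGroup.mk' R with hπ
  have hπsurj : Function.Surjective π := QuotientGroup.mk'_surjective R
  set Sset : Set (K ⧸ R) := π '' ((B : Set K) ∪ {h}) with hSset
  have hSgen : Subgroup.closure Sset = ⊤ := by
    rw [hSset, ← MonoidHom.map_closure, hgen]
    exact Subgroup.map_top_of_surjective π hπsurj
  have hpair : ∀ s ∈ Sset, ∀ t ∈ Sset, s * t = t * s := by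
    rintro s ⟨xs, hxs, rfl⟩ t ⟨xt, hxt, rfl⟩
    have key : ∀ b ∈ B, π b * π h = π h * π b := by
      intro b hb
      have hmem : ⁅b, h⁆ ∈ R := ⟨⟨b, hb⟩, rfl⟩
      have h1 : π ⁅b, h⁆ = 1 := by
        rw [hπ, QuotientGroup.mk'_apply]
        exact (QuotientGroup.eq_one_iff _).mpr hmem
      have h2 : ⁅π b, π h⁆ = 1 := by rw [← map_commutatorElement]; exact h1
      exact commutatorElement_eq_one_iff_commute.mp h2
    rcases hxs with hxs | hxs <;> rcases hxt with hxt | hxt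
    · rw [← map_mul, ← map_mul, Subgroup.mul_comm_of_mem_isMulCommutative B hxs hxt]
    · rw [Set.mem_singleton_iff] at hxt; subst hxt
      exact key xs hxs
    · rw [Set.mem_singleton_iff] at hxs; subst hxs
      exact (key xt hxt).symm
    · rw [Set.mem_singleton_iff] at hxs; rw [Set.mem_singleton_iff] at hxt
      subst hxs; subst hxt; rfl
  have hcomm1 : ∀ s ∈ Sset, ∀ q : K ⧸ R, s * q = q * s := by
    intro s hs q
    have htop : (⊤ : Subgroup (K ⧸ R)) ≤ Subgroup.centralizer {s} := by
      rw [← hSgen, Subgroup.closure_le]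
      intro t ht
      rw [SetLike.mem_coe, Subgroup.mem_centralizer_iff]
      rintro g (rfl : g = s)
      exact hpair _ hs _ ht
    have := htop (Subgroup.mem_top q)
    rw [Subgroup.mem_centralizer_iff] at this
    exact this s rfl
  have hcommQ : ∀ q q' : K ⧸ R, q * q' = q' * q := by
    intro q q'
    have htop : (⊤ : Subgroup (K ⧸ R)) ≤ Subgroup.centralizer {q} := by
      rw [← hSgen, Subgroup.closure_le]
      intro t ht
      rw [SetLike.mem_coe, Subgroup.mem_centralizer_iff]
      rintro g (rfl : g = q)
      exact (hcomm1 _ ht _).symm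
    have := htop (Subgroup.mem_top q')
    rw [Subgroup.mem_centralizer_iff] at this
    exact this q rfl
  rw [Subgroup.commutator_le]
  intro g1 _ g2 _
  have h1 : π ⁅g1, g2⁆ = 1 := by
    rw [map_commutatorElement]
    exact commutatorElement_eq_one_iff_commute.mpr (hcommQ _ _)
  rw [hπ, QuotientGroup.mk'_apply] at h1
  exact (QuotientGroup.eq_one_iff _).mp h1

end Helpers

/-- A finite `p`-group of maximal class (order `pⁿ`, nilpotency class `n − 1`) with an
abelian subgroup of index `p` has all of its non-abelian subgroups of maximal class. -/
theorem stmt17 {G : Type*} [Group G] [Finite G] (p n : ℕ) (hp : p.Prime)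
    (hcard : Nat.card G = p ^ n)
    (hmax : (⊤ : Subgroup G).lowerCentralSeries (n - 1) = ⊥ ∧ ∀ m < n - 1, (⊤ : Subgroup G).lowerCentralSeries m ≠ ⊥)
    (A : Subgroup G) (hA : IsMulCommutative ↥A) (hAi : A.index = p) :
    ∀ H : Subgroup G, ¬ IsMulCommutative ↥H → ∀ m : ℕ, Nat.card H = p ^ m →
      (⊤ : Subgroup ↥H).lowerCentralSeries (m - 1) = ⊥ ∧
      ∀ l < m - 1, (⊤ : Subgroup ↥H).lowerCentralSeries l ≠ ⊥ := by
  intro H hHc m hm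
  haveI hfp : Fact p.Prime := ⟨hp⟩
  have hpG : IsPGroup p G := IsPGroup.of_card hcard
  have hpH : IsPGroup p ↥H := IsPGroup.of_card hm
  have hHA : ¬ H ≤ A := by
    intro hle
    exact hHc ⟨⟨fun a b => Subtype.ext
      (Subgroup.mul_comm_of_mem_isMulCommutative A (hle a.2) (hle b.2))⟩⟩
  obtain ⟨h0, h0H, h0A⟩ : ∃ x, x ∈ H ∧ x ∉ A := by
    by_contra hc; push_neg at hc; exact hHA fun x hx => hc x hx
  have hn1 : 1 ≤ n := by
    by_contra hn0
    have hdvd := Subgroup.index_dvd_card (H := A)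
    rw [hAi, hcard, show n = 0 by omega, pow_zero] at hdvd
    exact hp.one_lt.not_ge (Nat.le_of_dvd one_pos hdvd)
  have hcardA : Nat.card A = p ^ (n - 1) := by
    have h1 := Subgroup.card_mul_index A
    rw [hAi, hcard, show p ^ n = p ^ (n-1) * p by rw [← pow_succ]; congr 1; omega] at h1
    exact Nat.eq_of_mul_eq_mul_right hp.pos h1
  haveI hGnil : Group.IsNilpotent G := hpG.isNilpotent
  have hAco : IsCoatom A := isCoatom_of_index_prime hp hAi
  haveI hAnormal : A.Normal := by
    have hnc := normalizerCondition_of_isNilpotent (G := G)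
    rw [normalizerCondition_iff_only_full_group_self_normalizing] at hnc
    rcases lt_or_eq_of_le (Subgroup.le_normalizer (H := A)) with hlt | heq
    · exact Subgroup.normalizer_eq_top_iff.mp (hAco.2 _ hlt)
    · exact absurd (hnc A heq.symm) hAco.1
  set C : Subgroup G := A ⊓ Subgroup.centralizer {h0} with hCdef
  have hgenG : Subgroup.closure ((A : Set G) ∪ {h0}) = ⊤ :=
    closure_union_singleton_eq_top hp hAi h0A
  have hABh : ∀ a ∈ A, ⁅a, h0⁆ ∈ A := by
    intro a ha
    rw [commutatorElement_def, show a * h0 * a⁻¹ * h0⁻¹ = a * (h0 * a⁻¹ * h0⁻¹) by group]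
    exact A.mul_mem ha (hAnormal.conj_mem _ (A.inv_mem ha) h0)
  have hconjA : ∀ b ∈ A, h0 * b * h0⁻¹ ∈ A := fun b hb => hAnormal.conj_mem b hb h0
  have hconjA' : ∀ b ∈ A, h0⁻¹ * b * h0 ∈ A := by
    intro b hb
    have := hAnormal.conj_mem b hb h0⁻¹
    rwa [inv_inv] at this
  have hCmem : ∀ x : G, x ∈ A → x * h0 = h0 * x → x ∈ C := by
    intro x hxA hxc
    refine Subgroup.mem_inf.mpr ⟨hxA, Subgroup.mem_centralizer_iff.mpr ?_⟩
    rintro g (rfl : g = h0)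
    exact hxc.symm
  have hcardC : Nat.card C ≤ p := by
    rcases le_or_gt n 2 with hn2 | hn3
    · have h1 : Nat.card C ≤ Nat.card A := Subgroup.card_le_of_le inf_le_left
      have h2 : Nat.card A ≤ p := by
        rw [hcardA]
        calc p ^ (n-1) ≤ p ^ 1 := Nat.pow_le_pow_right hp.pos (by omega)
          _ = p := pow_one p
      exact le_trans h1 h2
    · set ψG := commHom A h0 hABh with hψG
      have hrange : (⊤ : Subgroup G).lowerCentralSeries 1 ≤ ψG.range := by
        rw [Subgroup.top_lowerCentralSeries_one, commutator_def]
        exact commutator_top_le_range A h0 hABh hconjA hconjA' hgenG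
      have hstrict : ∀ j, j < n - 1 → (⊤ : Subgroup G).lowerCentralSeries (j+1) < (⊤ : Subgroup G).lowerCentralSeries j := by
        intro j hj
        refine lt_of_le_of_ne (Subgroup.lowerCentralSeries_antitone ⊤ (Nat.le_succ j)) (fun hEq => ?_)
        have hstab := lcs_stab hEq (n-1) (by omega)
        exact (hmax.2 j hj) (by rw [← hstab, hmax.1])
      have hlowG : ∀ t, t ≤ n - 2 → p ^ t ≤ Nat.card ((⊤ : Subgroup G).lowerCentralSeries (n - 1 - t)) := by
        intro t
        induction t with
        | zero =>
          intro _
          simpa using Nat.one_le_iff_ne_zero.mpr Nat.card_pos.ne'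
        | succ t ih =>
          intro ht
          have h1 := hstrict (n - 1 - (t+1)) (by omega)
          rw [show n - 1 - (t+1) + 1 = n - 1 - t by omega] at h1
          have h3 := card_mul_le_of_lt hp hpG h1.le h1.ne
          have h4 := ih (by omega)
          calc p ^ (t+1) = p ^ t * p := pow_succ p t
            _ ≤ Nat.card ((⊤ : Subgroup G).lowerCentralSeries (n-1-t)) * p := Nat.mul_le_mul_right _ h4
            _ ≤ Nat.card ((⊤ : Subgroup G).lowerCentralSeries (n-1-(t+1))) := h3
      have hlow1 : p ^ (n-2) ≤ Nat.card ((⊤ : Subgroup G).lowerCentralSeries 1) := by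
        have := hlowG (n-2) le_rfl
        rwa [show n - 1 - (n-2) = 1 by omega] at this
      have hcount := card_dom_eq_range_mul_ker ψG
      have hrle : p ^ (n-2) ≤ Nat.card ψG.range :=
        le_trans hlow1 (Subgroup.card_le_of_le hrange)
      have hkle : Nat.card ψG.ker ≤ p := by
        by_contra hgt
        push_neg at hgt
        have hbig : p ^ (n-2) * (p+1) ≤ p ^ (n-1) := by
          calc p ^ (n-2) * (p+1) ≤ Nat.card ψG.range * Nat.card ψG.ker :=
                Nat.mul_le_mul hrle hgt
            _ = Nat.card A := hcount.symm
            _ = p ^ (n-1) := hcardA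
        rw [show p ^ (n-1) = p ^ (n-2) * p by rw [← pow_succ]; congr 1; omega,
          Nat.mul_add, Nat.mul_one] at hbig
        have hppos : 0 < p ^ (n-2) := Nat.pow_pos hp.pos
        exact absurd hbig (Nat.lt_add_of_pos_right hppos).not_ge
      have hCk : Nat.card C ≤ Nat.card ψG.ker := by
        have hmem : ∀ c : ↥C, (⟨(c : G), (Subgroup.mem_inf.mp c.2).1⟩ : ↥A) ∈ ψG.ker := by
          intro c
          have hc := (Subgroup.mem_centralizer_iff.mp (Subgroup.mem_inf.mp c.2).2) h0 rfl
          rw [MonoidHom.mem_ker, hψG, commHom_apply]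
          exact commutatorElement_eq_one_iff_commute.mpr hc.symm
        refine Nat.card_le_card_of_injective
          (fun c : ↥C => (⟨⟨(c : G), (Subgroup.mem_inf.mp c.2).1⟩, hmem c⟩ : ↥ψG.ker)) ?_
        intro a b hab
        apply Subtype.ext
        exact congrArg (fun x : ↥ψG.ker => ((x : ↥A) : G)) hab
      exact le_trans hCk hkle
  have hm2 : 2 ≤ m := by
    by_contra hlt
    push_neg at hlt
    interval_cases m
    · have hc1 : Nat.card H = 1 := by rw [hm, pow_zero]
      haveI := (Nat.card_eq_one_iff_unique.mp hc1).1
      exact hHc ⟨⟨fun a b => Subsingleton.elim _ _⟩⟩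
    · haveI : IsCyclic ↥H := isCyclic_of_prime_card (by rw [hm, pow_one])
      refine hHc ⟨⟨fun a b => commutative_of_cyclic_center_quotient (MonoidHom.id ↥H) ?_ a b⟩⟩
      intro x hx
      rw [MonoidHom.mem_ker, MonoidHom.id_apply] at hx
      rw [hx]
      exact Subgroup.one_mem _
  set B₁ : Subgroup ↥H := A.subgroupOf H with hB₁def
  haveI hB₁comm : IsMulCommutative ↥B₁ := ⟨⟨fun a b => by
    have ha := Subgroup.mem_subgroupOf.mp a.2
    have hb := Subgroup.mem_subgroupOf.mp b.2
    apply Subtype.ext; apply Subtype.ext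
    push_cast
    exact Subgroup.mul_comm_of_mem_isMulCommutative A ha hb⟩⟩
  have hB₁i : B₁.index = p := by
    have hdvd := Subgroup.relIndex_dvd_index_of_normal (H := A) (K := H)
    rw [hAi] at hdvd
    rcases (Nat.Prime.eq_one_or_self_of_dvd hp _ hdvd) with h1 | h1
    · exact absurd (Subgroup.relIndex_eq_one.mp h1) hHA
    · exact h1
  have hcardB₁ : Nat.card B₁ = p ^ (m-1) := by
    have h1 := Subgroup.card_mul_index B₁
    rw [hB₁i, hm, show p ^ m = p ^ (m-1) * p by rw [← pow_succ]; congr 1; omega] at h1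
    exact Nat.eq_of_mul_eq_mul_right hp.pos h1
  set h' : ↥H := ⟨h0, h0H⟩ with hh'def
  have h'B : h' ∉ B₁ := fun hmem => h0A (Subgroup.mem_subgroupOf.mp hmem)
  have hBh' : ∀ b ∈ B₁, ⁅b, h'⁆ ∈ B₁ := by
    intro b hb
    rw [Subgroup.mem_subgroupOf]
    have hcoe : ((⁅b, h'⁆ : ↥H) : G) = ⁅(b : G), h0⁆ := by
      simp [commutatorElement_def, hh'def]
    rw [hcoe]
    exact hABh _ (Subgroup.mem_subgroupOf.mp hb)
  have hconjB : ∀ b ∈ B₁, h' * b * h'⁻¹ ∈ B₁ := by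
    intro b hb
    rw [Subgroup.mem_subgroupOf]
    have hcoe : ((h' * b * h'⁻¹ : ↥H) : G) = h0 * (b : G) * h0⁻¹ := by
      simp [hh'def]
    rw [hcoe]
    exact hconjA _ (Subgroup.mem_subgroupOf.mp hb)
  have hconjB' : ∀ b ∈ B₁, h'⁻¹ * b * h' ∈ B₁ := by
    intro b hb
    rw [Subgroup.mem_subgroupOf]
    have hcoe : ((h'⁻¹ * b * h' : ↥H) : G) = h0⁻¹ * (b : G) * h0 := by
      simp [hh'def]
    rw [hcoe]
    exact hconjA' _ (Subgroup.mem_subgroupOf.mp hb)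
  have hgenH : Subgroup.closure ((B₁ : Set ↥H) ∪ {h'}) = ⊤ :=
    closure_union_singleton_eq_top hp hB₁i h'B
  set ψ := commHom B₁ h' hBh' with hψdef
  have hrangeB₁ : ψ.range ≤ B₁ := by rintro x ⟨b, rfl⟩; exact hBh' _ b.2
  have hLCS1 : (⊤ : Subgroup ↥H).lowerCentralSeries 1 = ψ.range := by
    apply le_antisymm
    · rw [Subgroup.top_lowerCentralSeries_one, _root_.commutator_def]
      exact commutator_top_le_range B₁ h' hBh' hconjB hconjB' hgenH
    · rintro x ⟨b, rfl⟩
      rw [hψdef, commHom_apply, Subgroup.top_lowerCentralSeries_one, _root_.commutator_def]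
      exact Subgroup.commutator_mem_commutator (Subgroup.mem_top _) (Subgroup.mem_top _)
  haveI hHnil : Group.IsNilpotent ↥H := hpH.isNilpotent
  -- kernel of ψ maps into C
  have hkerC : ∀ k : ↥H, k ∈ B₁ → ⁅k, h'⁆ = 1 → (k : G) ∈ C := by
    intro k hk hc
    have hkG : (k : G) * h0 = h0 * (k : G) := by
      have := congrArg (fun x : ↥H => (x : G)) (commutatorElement_eq_one_iff_commute.mp hc)
      simpa [hh'def] using this
    exact hCmem _ (Subgroup.mem_subgroupOf.mp hk) hkG
  have hkerle : Nat.card ψ.ker ≤ p := by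
    have hmem : ∀ k : ↥ψ.ker, (((k : ↥B₁) : ↥H) : G) ∈ C := by
      intro k
      have hk1 : ⁅((k : ↥B₁) : ↥H), h'⁆ = 1 := k.2
      exact hkerC _ (k : ↥B₁).2 hk1
    have hle := Nat.card_le_card_of_injective
      (fun k : ↥ψ.ker => (⟨((k : ↥B₁) : ↥H), hmem k⟩ : ↥C)) ?_
    · exact le_trans hle hcardC
    · intro a b hab
      apply Subtype.ext; apply Subtype.ext; apply Subtype.ext
      exact congrArg (fun x : ↥C => (x : G)) hab
  have hkerne : ψ.ker ≠ ⊥ := by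
    intro hkbot
    have hc1 : Nat.card ψ.ker = 1 := by rw [hkbot]; exact Subgroup.card_bot
    have hcr : Nat.card ψ.range = p ^ (m-1) := by
      have hcnt := card_dom_eq_range_mul_ker ψ
      rw [hc1, mul_one] at hcnt
      rw [← hcnt, hcardB₁]
    have hreq : ψ.range = B₁ :=
      Subgroup.eq_of_le_of_card_ge hrangeB₁ (by rw [hcr, hcardB₁])
    have hsub : ∀ i, B₁ ≤ (⊤ : Subgroup ↥H).lowerCentralSeries (i + 1) := by
      intro i
      induction i with
      | zero =>
        show B₁ ≤ (⊤ : Subgroup ↥H).lowerCentralSeries 1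
        rw [hLCS1, hreq]
      | succ i ih =>
        intro x hx
        rw [← hreq] at hx
        obtain ⟨b, rfl⟩ := hx
        rw [hψdef, commHom_apply, Subgroup.lowerCentralSeries_succ]
        exact Subgroup.commutator_mem_commutator (ih b.2) (Subgroup.mem_top _)
      -- done
    have hbot2 : B₁ = ⊥ := by
      have h1 := hsub (Group.nilpotencyClass ↥H)
      have h2 : (⊤ : Subgroup ↥H).lowerCentralSeries (Group.nilpotencyClass ↥H + 1) ≤
          (⊤ : Subgroup ↥H).lowerCentralSeries (Group.nilpotencyClass ↥H) :=
        Subgroup.lowerCentralSeries_antitone ⊤ (Nat.le_succ _)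
      rw [Subgroup.lowerCentralSeries_nilpotencyClass] at h2
      exact le_bot_iff.mp (le_trans h1 h2)
    have hcb := hcardB₁
    rw [hbot2, Subgroup.card_bot] at hcb
    have : p ≤ 1 := by
      calc p = p ^ 1 := (pow_one p).symm
        _ ≤ p ^ (m-1) := Nat.pow_le_pow_right hp.pos (by omega)
        _ = 1 := hcb.symm
    exact hp.one_lt.not_ge this
  have hkerge : p ≤ Nat.card ψ.ker := by
    obtain ⟨a, hak⟩ := ((hpH.to_subgroup B₁).to_subgroup ψ.ker).exists_card_eq
    have hne1 : Nat.card ψ.ker ≠ 1 := fun h1 => hkerne (Subgroup.card_eq_one.mp h1)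
    rw [hak] at hne1 ⊢
    have ha0 : a ≠ 0 := fun h0' => hne1 (by rw [h0', pow_zero])
    calc p = p ^ 1 := (pow_one p).symm
      _ ≤ p ^ a := Nat.pow_le_pow_right hp.pos (by omega)
  have hkerp : Nat.card ψ.ker = p := le_antisymm hkerle hkerge
  have hLCS1card : Nat.card ((⊤ : Subgroup ↥H).lowerCentralSeries 1) = p ^ (m-2) := by
    have hcnt := card_dom_eq_range_mul_ker ψ
    rw [hcardB₁, hkerp] at hcnt
    have hr : Nat.card ψ.range = p ^ (m-2) := by
      rw [show p ^ (m-1) = p ^ (m-2) * p by rw [← pow_succ]; congr 1; omega] at hcnt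
      exact (Nat.eq_of_mul_eq_mul_right hp.pos hcnt.symm)
    rw [hLCS1, hr]
  have hm3 : 3 ≤ m := by
    by_contra hlt
    push_neg at hlt
    have hmeq : m = 2 := by omega
    have hb : (⊤ : Subgroup ↥H).lowerCentralSeries 1 = ⊥ := by
      apply Subgroup.card_eq_one.mp
      rw [hLCS1card, hmeq]
      norm_num
    refine hHc ⟨⟨fun a b => ?_⟩⟩
    have hmemc : ⁅a, b⁆ ∈ (⊤ : Subgroup ↥H).lowerCentralSeries 1 := by
      rw [Subgroup.top_lowerCentralSeries_one, _root_.commutator_def]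
      exact Subgroup.commutator_mem_commutator (Subgroup.mem_top _) (Subgroup.mem_top _)
    rw [hb, Subgroup.mem_bot] at hmemc
    exact commutatorElement_eq_one_iff_commute.mp hmemc
  -- step inequality
  have hstep : ∀ l, 1 ≤ l → Nat.card ((⊤ : Subgroup ↥H).lowerCentralSeries l) ≤
      Nat.card ((⊤ : Subgroup ↥H).lowerCentralSeries (l+1)) * p := by
    intro l hl
    have hSB : (⊤ : Subgroup ↥H).lowerCentralSeries l ≤ B₁ :=
      le_trans (le_trans (Subgroup.lowerCentralSeries_antitone ⊤ hl) (le_of_eq hLCS1)) hrangeB₁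
    set f := ψ.comp (Subgroup.inclusion hSB) with hfdef
    have hcnt := card_dom_eq_range_mul_ker f
    have hfr : f.range ≤ (⊤ : Subgroup ↥H).lowerCentralSeries (l+1) := by
      rintro x ⟨s, rfl⟩
      have hfs : f s = ⁅((s : ↥((⊤ : Subgroup ↥H).lowerCentralSeries l)) : ↥H), h'⁆ := rfl
      rw [hfs, Subgroup.lowerCentralSeries_succ]
      exact Subgroup.commutator_mem_commutator s.2 (Subgroup.mem_top _)
    have hfk : Nat.card f.ker ≤ p := by
      have hmem : ∀ k : ↥f.ker, ((((k : ↥((⊤ : Subgroup ↥H).lowerCentralSeries l)) : ↥H)) : G) ∈ C := by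
        intro k
        have hk1 : f (k : ↥((⊤ : Subgroup ↥H).lowerCentralSeries l)) = 1 := k.2
        have hk2 : ⁅((k : ↥((⊤ : Subgroup ↥H).lowerCentralSeries l)) : ↥H), h'⁆ = 1 := hk1
        exact hkerC _ (hSB (k : ↥((⊤ : Subgroup ↥H).lowerCentralSeries l)).2) hk2
      have hle := Nat.card_le_card_of_injective
        (fun k : ↥f.ker => (⟨((k : ↥((⊤ : Subgroup ↥H).lowerCentralSeries l)) : ↥H), hmem k⟩ : ↥C)) ?_
      · exact le_trans hle hcardC
      · intro a b hab
        apply Subtype.ext; apply Subtype.ext; apply Subtype.ext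
        exact congrArg (fun x : ↥C => (x : G)) hab
    calc Nat.card ((⊤ : Subgroup ↥H).lowerCentralSeries l) = Nat.card f.range * Nat.card f.ker := hcnt
      _ ≤ Nat.card ((⊤ : Subgroup ↥H).lowerCentralSeries (l+1)) * p :=
        Nat.mul_le_mul (Subgroup.card_le_of_le hfr) hfk
  -- lower bounds
  have hlowH : ∀ l, l ≤ m - 2 → p ^ (m-1-l) ≤ Nat.card ((⊤ : Subgroup ↥H).lowerCentralSeries l) := by
    intro l
    induction l with
    | zero =>
      intro _
      rw [Subgroup.lowerCentralSeries_zero, Subgroup.card_top, hm]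
      exact Nat.pow_le_pow_right hp.pos (by omega)
    | succ l ih =>
      intro hl
      rcases Nat.eq_zero_or_pos l with rfl | hl1
      · rw [hLCS1card]
        exact Nat.pow_le_pow_right hp.pos (by omega)
      · have h1 := hstep l hl1
        have h2 := ih (by omega)
        have h3 : p ^ (m-1-(l+1)) * p = p ^ (m-1-l) := by rw [← pow_succ]; congr 1; omega
        have h4 := le_trans h2 h1
        rw [← h3] at h4
        exact Nat.le_of_mul_le_mul_right h4 hp.pos
  constructor
  · -- part 1
    by_contra hne
    have hstrictH : ∀ j, j < m-1 →
        (⊤ : Subgroup ↥H).lowerCentralSeries (j+1) < (⊤ : Subgroup ↥H).lowerCentralSeries j := by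
      intro j hj
      refine lt_of_le_of_ne (Subgroup.lowerCentralSeries_antitone ⊤ (Nat.le_succ j)) (fun hEq => ?_)
      have hstab := lcs_stab hEq (max (m-1) (Group.nilpotencyClass ↥H))
        (le_trans (by omega) (le_max_left _ _))
      have hbt : (⊤ : Subgroup ↥H).lowerCentralSeries (max (m-1) (Group.nilpotencyClass ↥H)) = ⊥ := by
        have h2 := Subgroup.lowerCentralSeries_antitone (G := ↥H) ⊤
          (le_max_right (m-1) (Group.nilpotencyClass ↥H))
        rw [Subgroup.lowerCentralSeries_nilpotencyClass] at h2
        exact le_bot_iff.mp h2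
      have hjb : (⊤ : Subgroup ↥H).lowerCentralSeries j = ⊥ := by rw [← hstab, hbt]
      exact hne (le_bot_iff.mp (hjb ▸ Subgroup.lowerCentralSeries_antitone ⊤ (le_of_lt hj)))
    have hupper : ∀ t, t ≤ m - 2 →
        p ^ t * Nat.card ((⊤ : Subgroup ↥H).lowerCentralSeries (m-1)) ≤
        Nat.card ((⊤ : Subgroup ↥H).lowerCentralSeries (m-1-t)) := by
      intro t
      induction t with
      | zero => intro _; simp
      | succ t ih =>
        intro ht
        have h1 := hstrictH (m-1-(t+1)) (by omega)
        rw [show m-1-(t+1)+1 = m-1-t by omega] at h1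
        have h3 := card_mul_le_of_lt hp hpH h1.le h1.ne
        have h4 := ih (by omega)
        calc p ^ (t+1) * Nat.card ((⊤ : Subgroup ↥H).lowerCentralSeries (m-1))
            = (p ^ t * Nat.card ((⊤ : Subgroup ↥H).lowerCentralSeries (m-1))) * p := by ring
          _ ≤ Nat.card ((⊤ : Subgroup ↥H).lowerCentralSeries (m-1-t)) * p := Nat.mul_le_mul_right _ h4
          _ ≤ Nat.card ((⊤ : Subgroup ↥H).lowerCentralSeries (m-1-(t+1))) := h3
    have hfin := hupper (m-2) le_rfl
    rw [show m-1-(m-2) = 1 by omega, hLCS1card] at hfin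
    have hz2 : 2 ≤ Nat.card ((⊤ : Subgroup ↥H).lowerCentralSeries (m-1)) := by
      have hne1 : Nat.card ((⊤ : Subgroup ↥H).lowerCentralSeries (m-1)) ≠ 1 :=
        fun h1 => hne (Subgroup.card_eq_one.mp h1)
      have hpos : 0 < Nat.card ((⊤ : Subgroup ↥H).lowerCentralSeries (m-1)) := Nat.card_pos
      omega
    have hppos : 0 < p ^ (m-2) := Nat.pow_pos hp.pos
    have hcontra : p ^ (m-2) * 2 ≤ p ^ (m-2) :=
      le_trans (Nat.mul_le_mul_left _ hz2) hfin
    omega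
  · -- part 2
    intro l hl hbot
    have hlow := hlowH l (by omega)
    rw [hbot, Subgroup.card_bot] at hlow
    have hple : p ≤ 1 := by
      calc p = p ^ 1 := (pow_one p).symm
        _ ≤ p ^ (m-1-l) := Nat.pow_le_pow_right hp.pos (by omega)
        _ ≤ 1 := hlow
    exact hp.one_lt.not_ge hple
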